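/- arXiv:1805.04577 — 7 statements merged into one kernel-verified Lean document; each statement's English description precedes it below -/
import Mathlib

section
/- Suppose P : W → ℝ satisfies the error bound condition EBC(θ, α), i.e., for every w in W, ‖w - w*‖² ≤ α (P(w) - P(w*))^θ where w* is the closest minimizer of P in W, and suppose f(·, z) is G-Lipschitz for every z with P(w) = E_z[f(w,z)]. Then for every w in W, E_z[(f(w,z) - f(w*,z))²] ≤ G²·α · (E_z[f(w,z) - f(w*,z)])^θ, i.e., a relaxed Bernstein condition holds with constant B = G²α. -/
open MeasureTheory

theorem stmt0 {d : ℕ} {Z : Type*} [MeasurableSpace Z] (μ : Measure Z) [IsProbabilityMeasure μ]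
    (W : Set (EuclideanSpace ℝ (Fin d)))
    (f : EuclideanSpace ℝ (Fin d) → Z → ℝ)
    (P : EuclideanSpace ℝ (Fin d) → ℝ)
    (proj : EuclideanSpace ℝ (Fin d) → EuclideanSpace ℝ (Fin d))
    (Wstar : Set (EuclideanSpace ℝ (Fin d)))
    (G α θ : ℝ) (hG : 0 < G) (hα : 0 < α) (hθ : θ ∈ Set.Ioc (0:ℝ) 1)
    (hWcomp : IsCompact W) (hWconv : Convex ℝ W)
    (hP : ∀ w, P w = ∫ z, f w z ∂μ)
    (hint : ∀ w, Integrable (fun z => f w z) μ)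
    (hint2 : ∀ w u, Integrable (fun z => (f w z - f u z) ^ 2) μ)
    (hWstar : Wstar = {u ∈ W | ∀ u' ∈ W, P u ≤ P u'})
    (hproj : ∀ w ∈ W, proj w ∈ Wstar ∧ ∀ u ∈ Wstar, ‖w - proj w‖ ≤ ‖w - u‖)
    (hEBC : ∀ w ∈ W, ‖w - proj w‖ ^ 2 ≤ α * (P w - P (proj w)) ^ θ)
    (hLip : ∀ z, ∀ w u, |f w z - f u z| ≤ G * ‖w - u‖) :
    ∀ w ∈ W,
      ∫ z, (f w z - f (proj w) z) ^ 2 ∂μ ≤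
        G ^ 2 * α * (∫ z, (f w z - f (proj w) z) ∂μ) ^ θ := by
  intro w hw
  set u := proj w with hu
  have hintd : ∫ z, (f w z - f u z) ∂μ = P w - P u := by
    rw [integral_sub (hint w) (hint u), hP, hP]
  have step1 : ∫ z, (f w z - f u z) ^ 2 ∂μ ≤ G ^ 2 * ‖w - u‖ ^ 2 := by
    calc ∫ z, (f w z - f u z) ^ 2 ∂μ ≤ ∫ _z, (G * ‖w - u‖) ^ 2 ∂μ := by
          apply integral_mono (hint2 w u) (integrable_const _)
          intro z
          show (f w z - f u z) ^ 2 ≤ (G * ‖w - u‖) ^ 2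
          rw [← sq_abs]
          exact pow_le_pow_left₀ (abs_nonneg _) (hLip z w u) 2
      _ = (G * ‖w - u‖) ^ 2 := by simp
      _ = G ^ 2 * ‖w - u‖ ^ 2 := by ring
  have step2 : G ^ 2 * ‖w - u‖ ^ 2 ≤ G ^ 2 * (α * (P w - P u) ^ θ) := by
    have := hEBC w hw
    nlinarith [sq_nonneg G]
  rw [hintd]
  calc ∫ z, (f w z - f u z) ^ 2 ∂μ ≤ G ^ 2 * (α * (P w - P u) ^ θ) :=
        le_trans step1 step2
    _ = G ^ 2 * α * (P w - P u) ^ θ := by ring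
end

section
/- Let X be a bounded random variable with |X| ≤ a almost surely, E[X] ≥ 0, and Var(X) ≤ B (E[X])^θ for some θ ∈ (0,1] and B > 0. Fix b > 0, let κ(x) = (e^x - x - 1)/x² (with κ(0) = 1/2), c = 1/(B κ(2ba)), and for ε > 0 set η = min(c ε^{1-θ}, b). Then E[e^{-ηX}] ≤ e^{ηε}. -/
open MeasureTheory

lemma aux_hasDerivAt_p (x : ℝ) :
    HasDerivAt (fun x => (x - 2) * Real.exp x + (x + 2)) ((x - 1) * Real.exp x + 1) x := by
  have h1 : HasDerivAt (fun x : ℝ => x - 2) 1 x := (hasDerivAt_id x).sub_const 2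
  have h2 := h1.mul (Real.hasDerivAt_exp x)
  have h3 : HasDerivAt (fun x : ℝ => x + 2) 1 x := (hasDerivAt_id x).add_const 2
  have h4 := h2.add h3
  exact h4.congr_deriv (by ring)

lemma aux_hasDerivAt_q (x : ℝ) :
    HasDerivAt (fun x => (x - 1) * Real.exp x + 1) (x * Real.exp x) x := by
  have h1 : HasDerivAt (fun x : ℝ => x - 1) 1 x := (hasDerivAt_id x).sub_const 1
  have h2 := (h1.mul (Real.hasDerivAt_exp x)).add_const 1
  exact h2.congr_deriv (by ring)

lemma aux_q_nonneg {x : ℝ} (hx : 0 ≤ x) : 0 ≤ (x - 1) * Real.exp x + 1 := by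
  have hmono : MonotoneOn (fun x => (x - 1) * Real.exp x + 1) (Set.Ici (0:ℝ)) := by
    apply monotoneOn_of_deriv_nonneg (convex_Ici 0)
    · exact (Continuous.mul (by continuity) Real.continuous_exp).add continuous_const |>.continuousOn
    · intro y _
      exact (aux_hasDerivAt_q y).differentiableAt.differentiableWithinAt
    · intro y hy
      rw [interior_Ici] at hy
      rw [(aux_hasDerivAt_q y).deriv]
      have h0 : (0:ℝ) < y := hy
      positivity
  have := hmono (Set.self_mem_Ici) hx hx
  simpa using this

lemma aux_p_nonneg {x : ℝ} (hx : 0 ≤ x) : 0 ≤ (x - 2) * Real.exp x + (x + 2) := by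
  have hmono : MonotoneOn (fun x => (x - 2) * Real.exp x + (x + 2)) (Set.Ici (0:ℝ)) := by
    apply monotoneOn_of_deriv_nonneg (convex_Ici 0)
    · exact (Continuous.mul (by continuity) Real.continuous_exp).add (by continuity) |>.continuousOn
    · intro y _
      exact (aux_hasDerivAt_p y).differentiableAt.differentiableWithinAt
    · intro y hy
      rw [interior_Ici] at hy
      rw [(aux_hasDerivAt_p y).deriv]
      exact aux_q_nonneg hy.le
  have := hmono (Set.self_mem_Ici) hx hx
  simpa using this

-- Lemma A : exp(-y) + 2y ≤ exp y for y ≥ 0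
lemma aux_A {y : ℝ} (hy : 0 ≤ y) : Real.exp (-y) + 2 * y ≤ Real.exp y := by
  have hmono : MonotoneOn (fun y => Real.exp y - Real.exp (-y) - 2 * y) (Set.Ici (0:ℝ)) := by
    apply monotoneOn_of_deriv_nonneg (convex_Ici 0)
    · fun_prop
    · intro z _
      exact ((Real.differentiable_exp z |>.hasDerivAt.sub ((hasDerivAt_neg z).exp)).sub
        ((hasDerivAt_id z).const_mul 2)).differentiableAt.differentiableWithinAt
    · intro z _
      have hd : HasDerivAt (fun y => Real.exp y - Real.exp (-y) - 2 * y)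
          (Real.exp z - Real.exp (-z) * (-1) - 2 * 1) z :=
        ((Real.hasDerivAt_exp z).sub ((hasDerivAt_neg z).exp)).sub ((hasDerivAt_id z).const_mul 2)
      rw [hd.deriv]
      have h1 := Real.add_one_le_exp z
      have h2 := Real.add_one_le_exp (-z)
      nlinarith
  have := hmono (Set.self_mem_Ici) hy hy
  simp only [neg_zero, Real.exp_zero, mul_zero, sub_zero, sub_self] at this
  linarith

-- Lemma B : monotonicity of (exp x - x - 1)/x^2 on positives
lemma aux_B {y d : ℝ} (hy : 0 < y) (hyd : y ≤ d) :
    (Real.exp y - y - 1) * d ^ 2 ≤ (Real.exp d - d - 1) * y ^ 2 := by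
  have hmono : MonotoneOn (fun x => (Real.exp x - x - 1) / x ^ 2) (Set.Ici y) := by
    apply monotoneOn_of_deriv_nonneg (convex_Ici y)
    · apply ContinuousOn.div (by fun_prop) (by fun_prop)
      intro x hx
      have h0 : 0 < x := lt_of_lt_of_le hy hx
      positivity
    · intro x hx
      rw [interior_Ici] at hx
      have hxpos : 0 < x := lt_trans hy hx
      have hx0 : (x:ℝ) ^ 2 ≠ 0 := by positivity
      have hnum : HasDerivAt (fun x => Real.exp x - x - 1) (Real.exp x - 1) x := by
        have := ((Real.hasDerivAt_exp x).sub (hasDerivAt_id x)).sub_const 1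
        simpa using this
      have hden : HasDerivAt (fun x : ℝ => x ^ 2) (2 * x) x := by
        simpa [mul_comm] using hasDerivAt_pow 2 x
      exact (hnum.div hden hx0).differentiableAt.differentiableWithinAt
    · intro x hx
      rw [interior_Ici] at hx
      have hxpos : 0 < x := lt_trans hy hx
      have hx0 : (x:ℝ) ^ 2 ≠ 0 := by positivity
      have hnum : HasDerivAt (fun x => Real.exp x - x - 1) (Real.exp x - 1) x := by
        have := ((Real.hasDerivAt_exp x).sub (hasDerivAt_id x)).sub_const 1
        simpa using this
      have hden : HasDerivAt (fun x : ℝ => x ^ 2) (2 * x) x := by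
        simpa [mul_comm] using hasDerivAt_pow 2 x
      rw [show (fun x => (Real.exp x - x - 1) / x ^ 2) = ((fun x => Real.exp x - x - 1) / fun x => x ^ 2) from rfl, (hnum.div hden hx0).deriv]
      apply div_nonneg _ (by positivity)
      have hp := aux_p_nonneg hxpos.le
      nlinarith
  have h := hmono (Set.self_mem_Ici) hyd hyd
  have hy2 : (0:ℝ) < y ^ 2 := by positivity
  have hd2 : (0:ℝ) < d ^ 2 := pow_pos (lt_of_lt_of_le hy hyd) 2
  rw [div_le_div_iff₀ hy2 hd2] at h
  linarith

-- key pointwise bound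
lemma aux_key {d K y : ℝ} (hd : 0 < d) (hK : K = (Real.exp d - d - 1) / d ^ 2)
    (hy : |y| ≤ d) : Real.exp y ≤ 1 + y + K * y ^ 2 := by
  rcases eq_or_ne y 0 with rfl | hy0
  · simp
  · have ht : 0 < |y| := abs_pos.mpr hy0
    have h1 : Real.exp y - y - 1 ≤ Real.exp |y| - |y| - 1 := by
      rcases abs_cases y with ⟨h, _⟩ | ⟨h, hneg⟩
      · rw [h]
      · rw [h]
        have := aux_A (y := -y) (by linarith)
        simp only [neg_neg] at this
        linarith
    have h2 := aux_B ht hy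
    have hd2 : (0:ℝ) < d ^ 2 := by positivity
    have h3 : Real.exp |y| - |y| - 1 ≤ K * |y| ^ 2 := by
      rw [hK, div_mul_eq_mul_div, le_div_iff₀ hd2]
      linarith [h2]
    have h4 : |y| ^ 2 = y ^ 2 := sq_abs y
    rw [h4] at h3
    linarith

theorem stmt1 {Ω : Type*} [MeasurableSpace Ω] (μ : Measure Ω) [IsProbabilityMeasure μ]
    (X : Ω → ℝ) (a B θ b ε : ℝ)
    (ha : 0 < a) (hB : 0 < B) (hθ : θ ∈ Set.Ioc (0:ℝ) 1) (hb : 0 < b) (hε : 0 < ε)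
    (hmeas : Measurable X)
    (hbdd : ∀ᵐ ω ∂μ, |X ω| ≤ a)
    (hmean : 0 ≤ ∫ ω, X ω ∂μ)
    (hvar : ∫ ω, (X ω - ∫ ω', X ω' ∂μ) ^ 2 ∂μ ≤ B * (∫ ω, X ω ∂μ) ^ θ) :
    ∀ κ : ℝ → ℝ, (κ = fun x => if x = 0 then 1/2 else (Real.exp x - x - 1) / x ^ 2) →
    ∀ c : ℝ, c = 1 / (B * κ (2 * b * a)) →
    ∀ η : ℝ, η = min (c * ε ^ (1 - θ)) b →
      ∫ ω, Real.exp (-η * X ω) ∂μ ≤ Real.exp (η * ε) := by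
  intro κ hκ c hc η hη
  set m := ∫ ω, X ω ∂μ with hm
  set d : ℝ := 2 * b * a with hddef
  have hd : (0:ℝ) < d := by positivity
  set K : ℝ := (Real.exp d - d - 1) / d ^ 2 with hKdef
  have hκval : κ d = K := by rw [hκ]; simp [hd.ne']; rfl
  have hKpos : 0 < K := by
    apply div_pos _ (by positivity)
    have := Real.add_one_lt_exp (x := d) hd.ne'
    linarith
  have hcval : c = 1 / (B * K) := by rw [hc, hκval]
  have hcpos : 0 < c := by rw [hcval]; positivity
  have hcKB : c * (B * K) = 1 := by
    rw [hcval]; field_simp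
  have hη1 : η ≤ c * ε ^ (1 - θ) := hη ▸ min_le_left _ _
  have hηb : η ≤ b := hη ▸ min_le_right _ _
  have hηpos : 0 < η := by
    rw [hη]
    exact lt_min (mul_pos hcpos (Real.rpow_pos_of_pos hε _)) hb
  -- integrability
  have hXi : Integrable X μ :=
    ⟨hmeas.aestronglyMeasurable, HasFiniteIntegral.of_bounded (C := a)
      (by filter_upwards [hbdd] with ω h; simpa [Real.norm_eq_abs] using h)⟩
  have hmabs : |m| ≤ a := by
    have := norm_integral_le_of_norm_le_const (μ := μ) (f := X) (C := a)
      (by filter_upwards [hbdd] with ω h; simpa [Real.norm_eq_abs] using h)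
    simpa [Real.norm_eq_abs, measure_univ] using this
  have hYbdd : ∀ᵐ ω ∂μ, |X ω - m| ≤ 2 * a := by
    filter_upwards [hbdd] with ω h
    rw [abs_le] at *
    constructor <;> [linarith [h.1, hmabs.2]; linarith [h.2, hmabs.1]]
  have hY2i : Integrable (fun ω => (X ω - m) ^ 2) μ :=
    ⟨((hmeas.sub_const m).pow_const 2).aestronglyMeasurable,
      HasFiniteIntegral.of_bounded (C := (2 * a) ^ 2) (by
        filter_upwards [hYbdd] with ω h
        rw [Real.norm_eq_abs, abs_pow, ← sq_abs]
        exact pow_le_pow_left₀ (abs_nonneg _) (by simpa using h) 2)⟩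
  have hEi : Integrable (fun ω => Real.exp (-η * X ω)) μ :=
    ⟨(Real.measurable_exp.comp (hmeas.const_mul (-η))).aestronglyMeasurable,
      HasFiniteIntegral.of_bounded (C := Real.exp (η * a)) (by
        filter_upwards [hbdd] with ω h
        rw [Real.norm_eq_abs, abs_of_pos (Real.exp_pos _), Real.exp_le_exp]
        rw [abs_le] at h
        nlinarith [h.1, hηpos.le])⟩
  -- pointwise bound
  have hpt : ∀ᵐ ω ∂μ, Real.exp (-η * X ω) ≤
      Real.exp (-η * m) * (1 - η * (X ω - m) + K * η ^ 2 * (X ω - m) ^ 2) := by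
    filter_upwards [hYbdd] with ω h
    have hyd : |(-η) * (X ω - m)| ≤ d := by
      rw [abs_mul, abs_neg, abs_of_pos hηpos, hddef]
      calc η * |X ω - m| ≤ b * (2 * a) :=
            mul_le_mul hηb h (abs_nonneg _) hb.le
        _ = 2 * b * a := by ring
    have hk := aux_key hd hKdef hyd
    have heq : Real.exp (-η * X ω) = Real.exp (-η * m) * Real.exp (-η * (X ω - m)) := by
      rw [← Real.exp_add]; ring_nf
    rw [heq]
    have : Real.exp (-η * (X ω - m)) ≤ 1 - η * (X ω - m) + K * η ^ 2 * (X ω - m) ^ 2 := by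
      have := hk
      nlinarith [this]
    exact mul_le_mul_of_nonneg_left this (Real.exp_nonneg _)
  -- rhs integrable
  have hRi : Integrable (fun ω =>
      Real.exp (-η * m) * (1 - η * (X ω - m) + K * η ^ 2 * (X ω - m) ^ 2)) μ := by
    apply Integrable.const_mul
    exact ((integrable_const 1).sub ((hXi.sub (integrable_const m)).const_mul η)).add
      (hY2i.const_mul (K * η ^ 2))
  set V := ∫ ω, (X ω - m) ^ 2 ∂μ with hV
  have hVnn : 0 ≤ V := integral_nonneg fun ω => sq_nonneg _
  have hYint0 : ∫ ω, (X ω - m) ∂μ = 0 := by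
    rw [integral_sub hXi (integrable_const m)]
    simp [← hm]
  have hint : ∫ ω, Real.exp (-η * X ω) ∂μ ≤ Real.exp (-η * m) * (1 + K * η ^ 2 * V) := by
    calc ∫ ω, Real.exp (-η * X ω) ∂μ
        ≤ ∫ ω, Real.exp (-η * m) * (1 - η * (X ω - m) + K * η ^ 2 * (X ω - m) ^ 2) ∂μ :=
          integral_mono_ae hEi hRi hpt
      _ = Real.exp (-η * m) * (1 + K * η ^ 2 * V) := by
          have hsub : Integrable (fun ω => η * (X ω - m)) μ :=
            (hXi.sub (integrable_const m)).const_mul η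
          have hf : Integrable (fun ω => 1 - η * (X ω - m)) μ :=
            (integrable_const 1).sub hsub
          have hg : Integrable (fun ω => K * η ^ 2 * (X ω - m) ^ 2) μ :=
            hY2i.const_mul (K * η ^ 2)
          rw [integral_const_mul]
          congr 1
          rw [integral_add hf hg, integral_sub (integrable_const 1) hsub,
            integral_const_mul, integral_const_mul, hYint0]
          simp [hV]
  -- arithmetic conclusion
  have hmθnn : (0:ℝ) ≤ m ^ θ := Real.rpow_nonneg hmean _
  have hgm : ε ^ (1 - θ) * m ^ θ ≤ ε + m := by
    have h1 := Real.geom_mean_le_arith_mean2_weighted (w₁ := 1 - θ) (w₂ := θ)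
      (p₁ := ε) (p₂ := m) (by linarith [hθ.2]) hθ.1.le hε.le hmean (by ring)
    nlinarith [hθ.1, hθ.2, hε.le, hmean]
  have hexpo : -η * m + K * η ^ 2 * V ≤ η * ε := by
    have hεp : 0 < ε ^ (1 - θ) := Real.rpow_pos_of_pos hε _
    have s1 : K * η ^ 2 * V ≤ K * η ^ 2 * (B * m ^ θ) :=
      mul_le_mul_of_nonneg_left hvar (by positivity)
    have s2 : K * η ^ 2 * (B * m ^ θ) ≤ η * (ε ^ (1 - θ) * m ^ θ) := by
      have t1 : η * (K * B * m ^ θ) ≤ (c * ε ^ (1 - θ)) * (K * B * m ^ θ) :=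
        mul_le_mul_of_nonneg_right hη1 (by positivity)
      have t2 : (c * ε ^ (1 - θ)) * (K * B * m ^ θ) = ε ^ (1 - θ) * m ^ θ := by
        calc (c * ε ^ (1 - θ)) * (K * B * m ^ θ)
            = (c * (B * K)) * (ε ^ (1 - θ) * m ^ θ) := by ring
          _ = ε ^ (1 - θ) * m ^ θ := by rw [hcKB]; ring
      calc K * η ^ 2 * (B * m ^ θ) = η * (η * (K * B * m ^ θ)) := by ring
        _ ≤ η * ((c * ε ^ (1 - θ)) * (K * B * m ^ θ)) :=
            mul_le_mul_of_nonneg_left t1 hηpos.le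
        _ = η * (ε ^ (1 - θ) * m ^ θ) := by rw [t2]
    have s3 : η * (ε ^ (1 - θ) * m ^ θ) ≤ η * (ε + m) :=
      mul_le_mul_of_nonneg_left hgm hηpos.le
    linarith [s1, s2, s3]
  calc ∫ ω, Real.exp (-η * X ω) ∂μ ≤ Real.exp (-η * m) * (1 + K * η ^ 2 * V) := hint
    _ ≤ Real.exp (-η * m) * Real.exp (K * η ^ 2 * V) :=
        mul_le_mul_of_nonneg_left (by linarith [Real.add_one_le_exp (K * η ^ 2 * V)])
          (Real.exp_nonneg _)
    _ = Real.exp (-η * m + K * η ^ 2 * V) := (Real.exp_add _ _).symm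
    _ ≤ Real.exp (η * ε) := Real.exp_le_exp.mpr hexpo
end

section
/- Let X be a random variable with |X| ≤ a almost surely and η > 0 with 2ηa bounded. Then E[X] + (1/η) log E[e^{-ηX}] ≤ κ(2ηa) · η · Var(X), where κ(x) = (e^x - x - 1)/x² for x ≠ 0 and κ(0) = 1/2. -/
open MeasureTheory
open Nat

/-- For `y ≤ 0`, `exp y ≤ 1 + y + y^2 / 2`. -/
lemma exp_le_quad_of_nonpos {y : ℝ} (hy : y ≤ 0) :
    Real.exp y ≤ 1 + y + y ^ 2 / 2 := by
  have hdiff : Differentiable ℝ (fun t : ℝ => 1 + t + t ^ 2 / 2 - Real.exp t) := by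
    fun_prop
  have hderiv : ∀ t : ℝ, deriv (fun t : ℝ => 1 + t + t ^ 2 / 2 - Real.exp t) t
      = 1 + t - Real.exp t := by
    intro t
    have h1 : HasDerivAt (fun t : ℝ => 1 + t + t ^ 2 / 2 - Real.exp t)
        (0 + 1 + (2 * t ^ 1 * 1) / 2 - Real.exp t) t := by
      exact (((hasDerivAt_const t (1:ℝ)).add (hasDerivAt_id t)).add
        (((hasDerivAt_id t).pow 2).div_const 2)).sub (Real.hasDerivAt_exp t)
    have := h1.deriv
    simpa using this.trans (by ring)
  have hanti : Antitone (fun t : ℝ => 1 + t + t ^ 2 / 2 - Real.exp t) :=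
    antitone_of_deriv_nonpos hdiff (fun t => by
      rw [hderiv t]
      have := Real.add_one_le_exp t
      linarith)
  have h0 := hanti hy
  simp only [Real.exp_zero] at h0
  nlinarith [h0]

/-- Key pointwise bound: for `0 < c` and `y ≤ c`,
`exp y ≤ 1 + y + ((exp c - c - 1)/c^2) * y^2`. -/
lemma exp_le_quad_key {c : ℝ} (hc : 0 < c) {y : ℝ} (hy : y ≤ c) :
    Real.exp y ≤ 1 + y + (Real.exp c - c - 1) / c ^ 2 * y ^ 2 := by
  have hκhalf : 1 / 2 ≤ (Real.exp c - c - 1) / c ^ 2 := by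
    have h := Real.quadratic_le_exp_of_nonneg hc.le
    rw [le_div_iff₀ (by positivity)]
    nlinarith
  rcases le_or_gt y 0 with hy0 | hy0
  · have h1 := exp_le_quad_of_nonpos hy0
    nlinarith [sq_nonneg y]
  · -- 0 < y ≤ c : use the power series
    have hexp : ∀ x : ℝ, Real.exp x = ∑' n : ℕ, x ^ n / n ! := by
      intro x
      rw [Real.exp_eq_exp_ℝ, NormedSpace.exp_eq_tsum_div]
    have hsum : ∀ x : ℝ, Summable (fun n : ℕ => x ^ n / n !) :=
      fun x => Real.summable_pow_div_factorial x
    have htail : ∀ x : ℝ, Real.exp x = 1 + x + ∑' n : ℕ, x ^ (n + 2) / (n + 2)! := by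
      intro x
      have h := Summable.sum_add_tsum_nat_add (f := fun n : ℕ => x ^ n / n !) 2 (hsum x)
      rw [hexp x, ← h]
      simp [Finset.sum_range_succ]
    have hterm : ∀ n : ℕ, y ^ (n + 2) / (n + 2)! ≤
        (y ^ 2 / c ^ 2) * (c ^ (n + 2) / (n + 2)!) := by
      intro n
      have hyc : y ^ n ≤ c ^ n := pow_le_pow_left₀ hy0.le hy n
      have hfac : (0:ℝ) < (n + 2)! := by positivity
      rw [div_le_iff₀ hfac]
      have hc2 : (y ^ 2 / c ^ 2) * (c ^ (n + 2) / (n + 2)!) * (n + 2)!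
          = y ^ 2 * c ^ n := by
        field_simp
        ring
      rw [hc2]
      calc y ^ (n + 2) = y ^ 2 * y ^ n := by ring
        _ ≤ y ^ 2 * c ^ n := by nlinarith [sq_nonneg y]
    have hsum1 : Summable (fun n : ℕ => y ^ (n + 2) / (n + 2)!) := by
      have := (hsum y).comp_injective (add_left_injective 2)
      exact this
    have hsum2 : Summable (fun n : ℕ => c ^ (n + 2) / (n + 2)!) := by
      have := (hsum c).comp_injective (add_left_injective 2)
      exact this
    have hsum2' : Summable (fun n : ℕ => (y ^ 2 / c ^ 2) * (c ^ (n + 2) / (n + 2)!)) :=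
      hsum2.mul_left _
    have hts : (∑' n : ℕ, y ^ (n + 2) / (n + 2)!) ≤
        (y ^ 2 / c ^ 2) * ∑' n : ℕ, c ^ (n + 2) / (n + 2)! := by
      rw [← tsum_mul_left]
      exact Summable.tsum_le_tsum hterm hsum1 hsum2'
    have hcval : (∑' n : ℕ, c ^ (n + 2) / (n + 2)!) = Real.exp c - 1 - c := by
      have := htail c
      linarith
    have hyval := htail y
    rw [hyval]
    rw [hcval] at hts
    have : (y ^ 2 / c ^ 2) * (Real.exp c - 1 - c) =
        (Real.exp c - c - 1) / c ^ 2 * y ^ 2 := by ring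
    linarith [hts.trans_eq this]

theorem stmt2 {Ω : Type*} [MeasurableSpace Ω] (μ : Measure Ω) [IsProbabilityMeasure μ]
    (X : Ω → ℝ) (a η : ℝ)
    (ha : 0 < a) (hη : 0 < η)
    (hmeas : Measurable X)
    (hbdd : ∀ᵐ ω ∂μ, |X ω| ≤ a) :
    ∀ κ : ℝ → ℝ, (κ = fun x => if x = 0 then 1/2 else (Real.exp x - x - 1) / x ^ 2) →
      (∫ ω, X ω ∂μ) + (1 / η) * Real.log (∫ ω, Real.exp (-η * X ω) ∂μ) ≤
        κ (2 * η * a) * η * ∫ ω, (X ω - ∫ ω', X ω' ∂μ) ^ 2 ∂μ := by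
  intro κ hκ
  set m : ℝ := ∫ ω, X ω ∂μ with hm_def
  set c : ℝ := 2 * η * a with hc_def
  have hc : 0 < c := by positivity
  set κc : ℝ := (Real.exp c - c - 1) / c ^ 2 with hκc_def
  have hκeq : κ c = κc := by rw [hκ]; simp [hc.ne', hκc_def]
  -- integrability of X
  have hX_int : Integrable X μ := by
    refine (integrable_const a).mono' hmeas.aestronglyMeasurable ?_
    filter_upwards [hbdd] with ω h using by simpa using h
  have hm_abs : |m| ≤ a := by
    have h1 : |m| ≤ ∫ ω, |X ω| ∂μ := by
      simpa using norm_integral_le_integral_norm (f := X) (μ := μ)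
    have h2 : (∫ ω, |X ω| ∂μ) ≤ ∫ _ω, a ∂μ :=
      integral_mono_ae hX_int.abs (integrable_const a) hbdd
    simpa using h1.trans h2
  -- bound on X - m
  have hXm : ∀ᵐ ω ∂μ, |X ω - m| ≤ 2 * a := by
    filter_upwards [hbdd] with ω h
    have := abs_sub_abs_le_abs_sub (X ω) m
    calc |X ω - m| ≤ |X ω| + |m| := abs_sub (X ω) m
      _ ≤ a + a := add_le_add h hm_abs
      _ = 2 * a := by ring
  -- the exponential of the centered variable
  set Y : Ω → ℝ := fun ω => -η * (X ω - m) with hY_def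
  have hYm : Measurable Y := ((hmeas.sub_const m).const_mul (-η))
  have hYbdd : ∀ᵐ ω ∂μ, -c ≤ Y ω ∧ Y ω ≤ c := by
    filter_upwards [hXm] with ω h
    rw [abs_le] at h
    constructor
    · simp only [hY_def, hc_def]; nlinarith
    · simp only [hY_def, hc_def]; nlinarith
  have hexpY_int : Integrable (fun ω => Real.exp (Y ω)) μ := by
    refine (integrable_const (Real.exp c)).mono' hYm.exp.aestronglyMeasurable ?_
    filter_upwards [hYbdd] with ω h
    rw [Real.norm_eq_abs, abs_of_pos (Real.exp_pos _)]
    exact Real.exp_le_exp.2 h.2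
  have hXm_int : Integrable (fun ω => X ω - m) μ := hX_int.sub (integrable_const m)
  have hsq_int : Integrable (fun ω => (X ω - m) ^ 2) μ := by
    refine (integrable_const ((2*a) ^ 2)).mono'
      ((hmeas.sub_const m).pow_const 2).aestronglyMeasurable ?_
    filter_upwards [hXm] with ω h
    rw [Real.norm_eq_abs, abs_pow]
    exact pow_le_pow_left₀ (abs_nonneg _) h 2
  set V : ℝ := ∫ ω, (X ω - m) ^ 2 ∂μ with hV_def
  have hV_nonneg : 0 ≤ V :=
    integral_nonneg fun ω => sq_nonneg _
  set I : ℝ := ∫ ω, Real.exp (Y ω) ∂μ with hI_def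
  -- I ≤ 1 + κc * η^2 * V
  have hI_le : I ≤ 1 + κc * η ^ 2 * V := by
    have hrhs_int : Integrable (fun ω => 1 + Y ω + κc * (Y ω) ^ 2) μ := by
      refine ((integrable_const 1).add (hXm_int.const_mul (-η))).add ?_
      have : (fun ω => κc * (Y ω) ^ 2) = fun ω => (κc * η ^ 2) * (X ω - m) ^ 2 := by
        funext ω; simp only [hY_def]; ring
      rw [this]
      exact hsq_int.const_mul _
    have hmono : I ≤ ∫ ω, (1 + Y ω + κc * (Y ω) ^ 2) ∂μ := by
      refine integral_mono_ae hexpY_int hrhs_int ?_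
      filter_upwards [hYbdd] with ω h
      exact exp_le_quad_key hc h.2
    have hcomp : (∫ ω, (1 + Y ω + κc * (Y ω) ^ 2) ∂μ) = 1 + κc * η ^ 2 * V := by
      have h1 : (∫ ω, Y ω ∂μ) = 0 := by
        have : (∫ ω, Y ω ∂μ) = -η * ∫ ω, (X ω - m) ∂μ := by
          simp only [hY_def]
          exact integral_const_mul _ _
        rw [this, integral_sub hX_int (integrable_const m)]
        simp [hm_def]
      have h2 : (∫ ω, κc * (Y ω) ^ 2 ∂μ) = κc * η ^ 2 * V := by
        have heq : (fun ω => κc * (Y ω) ^ 2) = fun ω => (κc * η ^ 2) * (X ω - m) ^ 2 := by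
          funext ω; simp only [hY_def]; ring
        rw [heq, integral_const_mul]
      have hint1 : Integrable (fun ω => 1 + Y ω) μ := by
        exact (integrable_const 1).add (hXm_int.const_mul (-η))
      have hint1' : Integrable (fun ω => Y ω) μ := by
        exact hXm_int.const_mul (-η)
      have hint2 : Integrable (fun ω => κc * (Y ω) ^ 2) μ := by
        rw [show (fun ω => κc * (Y ω) ^ 2) = fun ω => (κc * η ^ 2) * (X ω - m) ^ 2 from
            funext fun ω => by simp only [hY_def]; ring]
        exact hsq_int.const_mul _
      rw [integral_add hint1 hint2, integral_add (integrable_const 1) hint1']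
      have h1' : (∫ ω, -η * (X ω - m) ∂μ) = 0 := by
        simpa only [hY_def] using h1
      simp only [integral_const, measure_univ, ENNReal.toReal_one, probReal_univ, one_smul]
      rw [h1', h2]
      ring
    exact hmono.trans_eq hcomp
  -- I > 0
  have hI_pos : 0 < I := by
    have hlow : Real.exp (-c) ≤ I := by
      have : (∫ _ω, Real.exp (-c) ∂μ) ≤ I := by
        refine integral_mono_ae (integrable_const _) hexpY_int ?_
        filter_upwards [hYbdd] with ω h
        exact Real.exp_le_exp.2 h.1
      simpa using this
    exact lt_of_lt_of_le (Real.exp_pos _) hlow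
  -- log I ≤ κc * η^2 * V
  have hlog : Real.log I ≤ κc * η ^ 2 * V := by
    have := Real.log_le_sub_one_of_pos hI_pos
    linarith
  -- relate ∫ exp(-ηX) to I
  have hsplit : (∫ ω, Real.exp (-η * X ω) ∂μ) = Real.exp (-η * m) * I := by
    have heq : (fun ω => Real.exp (-η * X ω))
        = fun ω => Real.exp (-η * m) * Real.exp (Y ω) := by
      funext ω
      rw [← Real.exp_add]
      congr 1
      simp only [hY_def]; ring
    rw [heq, integral_const_mul]
  have hlogsplit : Real.log (∫ ω, Real.exp (-η * X ω) ∂μ) = -η * m + Real.log I := by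
    rw [hsplit, Real.log_mul (Real.exp_ne_zero _) hI_pos.ne', Real.log_exp]
  -- conclude
  rw [hlogsplit, hκeq]
  have hstep : (1 / η) * (-η * m + Real.log I) = -m + (1 / η) * Real.log I := by
    field_simp
  rw [hstep]
  have hfin : (1 / η) * Real.log I ≤ κc * η * V := by
    have := mul_le_mul_of_nonneg_left hlog (le_of_lt (by positivity : (0:ℝ) < 1 / η))
    calc (1 / η) * Real.log I ≤ (1 / η) * (κc * η ^ 2 * V) := this
      _ = κc * η * V := by field_simp
  linarith
end

section
/- Suppose the error bound condition holds: ‖w - w*‖₂^{2/θ} ≤ α^{1/θ} (P(w) - P*) for all w ∈ W, where θ ∈ (0,1], α > 0, w* is the closest minimizer, and P* = min P. Then for any A ≥ 0, ε > 0, and w ∈ W: ‖w - w*‖₂ · √A ≤ max(1, α^{1/θ}/(4ε)) · A^{1/(2-θ)} + ε (P(w) - P*). -/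
lemma aux_young (θ ε β r A : ℝ) (hθ1 : 0 < θ) (hθ2 : θ ≤ 1) (hε : 0 < ε)
    (hβ : 0 < β) (hr : 0 ≤ r) (hA : 0 ≤ A) :
    r * Real.sqrt A ≤ max 1 (β / (4 * ε)) * A ^ (1 / (2 - θ)) + (ε / β) * r ^ (2 / θ) := by
  have h2θ : (0:ℝ) < 2 - θ := by linarith
  set p : ℝ := 2 / θ with hp
  set q : ℝ := 2 / (2 - θ) with hq
  have hp1 : 1 < p := by rw [hp, lt_div_iff₀ hθ1]; linarith
  have hppos : 0 < p := by linarith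
  have hq0 : 0 < q := by positivity
  have hq1 : 1 ≤ q := by rw [hq, le_div_iff₀ h2θ]; linarith
  have hpq : p.HolderConjugate q := by
    refine Real.holderConjugate_iff.mpr ⟨hp1, ?_⟩
    rw [hp, hq]
    field_simp
    ring
  set lam : ℝ := (p * ε / β) ^ p⁻¹ with hlam
  have hbase : 0 < p * ε / β := by positivity
  have hlampos : 0 < lam := Real.rpow_pos_of_pos hbase _
  have hy := Real.young_inequality_of_nonneg (a := lam * r) (b := Real.sqrt A / lam)
    (by positivity) (by positivity) hpq
  have hxy : lam * r * (Real.sqrt A / lam) = r * Real.sqrt A := by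
    field_simp
  rw [hxy] at hy
  have hlamp : lam ^ p = p * ε / β := by
    rw [hlam, ← Real.rpow_mul hbase.le, inv_mul_cancel₀ (ne_of_gt hppos), Real.rpow_one]
  have h1 : (lam * r) ^ p / p = ε / β * r ^ p := by
    rw [Real.mul_rpow hlampos.le hr, hlamp]
    field_simp
  set t : ℝ := p⁻¹ * q with ht
  have ht0 : 0 < t := by positivity
  have ht1 : t ≤ 1 := by
    rw [ht, hp, hq]
    rw [show (2/θ:ℝ)⁻¹ * (2/(2-θ)) = θ/(2-θ) by field_simp]
    rw [div_le_one h2θ]; linarith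
  have hlamq : lam ^ q = (p * ε / β) ^ t := by
    rw [hlam, ← Real.rpow_mul hbase.le]
  have h2 : (Real.sqrt A / lam) ^ q / q = (β / (p * ε)) ^ t / q * A ^ (1/(2-θ)) := by
    rw [Real.div_rpow (Real.sqrt_nonneg A) hlampos.le, hlamq,
      Real.sqrt_eq_rpow, ← Real.rpow_mul hA]
    rw [show (1/2 * q : ℝ) = 1/(2-θ) by rw [hq]; field_simp]
    have hinv : (β / (p * ε)) ^ t = ((p * ε / β) ^ t)⁻¹ := by
      rw [← Real.inv_rpow hbase.le, inv_div]
    rw [hinv]; ring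
  rw [h1, h2] at hy
  have hC : (β / (p * ε)) ^ t / q ≤ max 1 (β / (4 * ε)) := by
    rcases le_or_gt β (p * ε) with hc | hc
    · refine le_trans ?_ (le_max_left _ _)
      have hb1 : (β / (p * ε)) ^ t ≤ 1 :=
        Real.rpow_le_one (by positivity) (by rw [div_le_one (by positivity)]; exact hc) ht0.le
      calc (β / (p * ε)) ^ t / q ≤ 1 / q := by gcongr
        _ ≤ 1 := by rw [div_le_one hq0]; exact hq1
    · refine le_trans ?_ (le_max_right _ _)
      have hb1 : (1:ℝ) ≤ β / (p * ε) := by rw [le_div_iff₀ (by positivity)]; linarith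
      have : (β / (p * ε)) ^ t ≤ β / (p * ε) := by
        nth_rewrite 2 [show β / (p * ε) = (β / (p * ε)) ^ (1:ℝ) by rw [Real.rpow_one]]
        exact Real.rpow_le_rpow_of_exponent_le hb1 ht1
      calc (β / (p * ε)) ^ t / q ≤ (β / (p * ε)) / q := by gcongr
        _ = β * (θ * (2 - θ)) / (4 * ε) := by rw [hp, hq]; field_simp; ring
        _ ≤ β / (4 * ε) := by
          gcongr
          nlinarith [sq_nonneg (1 - θ)]
  have hApow : (0:ℝ) ≤ A ^ (1/(2-θ)) := Real.rpow_nonneg hA _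
  calc r * Real.sqrt A ≤ ε / β * r ^ p + (β / (p * ε)) ^ t / q * A ^ (1/(2-θ)) := hy
    _ ≤ ε / β * r ^ p + max 1 (β / (4 * ε)) * A ^ (1/(2-θ)) := by gcongr
    _ = max 1 (β / (4 * ε)) * A ^ (1/(2-θ)) + ε / β * r ^ p := by ring

theorem stmt3 {d : ℕ} (W : Set (EuclideanSpace ℝ (Fin d)))
    (P : EuclideanSpace ℝ (Fin d) → ℝ)
    (proj : EuclideanSpace ℝ (Fin d) → EuclideanSpace ℝ (Fin d))
    (Pstar θ α : ℝ)
    (hθ : θ ∈ Set.Ioc (0:ℝ) 1) (hα : 0 < α)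
    (hPstar : ∀ w ∈ W, Pstar ≤ P w)
    (hEBC : ∀ w ∈ W, ‖w - proj w‖ ^ (2 / θ) ≤ α ^ (1 / θ) * (P w - Pstar)) :
    ∀ A : ℝ, 0 ≤ A → ∀ ε : ℝ, 0 < ε → ∀ w ∈ W,
      ‖w - proj w‖ * Real.sqrt A ≤
        max 1 (α ^ (1 / θ) / (4 * ε)) * A ^ (1 / (2 - θ)) + ε * (P w - Pstar) := by
  intro A hA ε hε w hw
  set β : ℝ := α ^ (1 / θ) with hβdef
  have hβ : 0 < β := Real.rpow_pos_of_pos hα _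
  have key := aux_young θ ε β ‖w - proj w‖ A hθ.1 hθ.2 hε hβ (norm_nonneg _) hA
  have h2 : ε / β * ‖w - proj w‖ ^ (2 / θ) ≤ ε * (P w - Pstar) := by
    have := hEBC w hw
    calc ε / β * ‖w - proj w‖ ^ (2 / θ) ≤ ε / β * (β * (P w - Pstar)) := by
          gcongr
      _ = ε * (P w - Pstar) := by field_simp
  linarith
end

section
/- Consider the constrained problem min_{‖w‖₂ ≤ B} P(w) where P : ℝ^d → ℝ is convex and differentiable, B > 0, and assume min_{w ∈ ℝ^d} P(w) < min_{‖w‖₂ ≤ B} P(w). Then there exists λ > 0 and the unique constrained minimizer w* satisfies ‖w*‖₂ = B, w* is the unique global minimizer of P_λ(w) = P(w) + λ(‖w‖₂² - B²), and there exists μ > 0 such that ‖w - w*‖₂² ≤ μ²(P(w) - P(w*)) for all w with ‖w‖₂ ≤ B. That is, the problem satisfies EBC(θ = 1, μ²). -/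
set_option maxHeartbeats 1000000

open scoped RealInnerProductSpace

section aux

variable {d : ℕ}

/-- Convexity along a line. -/
lemma lineConv {P : EuclideanSpace ℝ (Fin d) → ℝ} (hconv : ConvexOn ℝ Set.univ P)
    (x y : EuclideanSpace ℝ (Fin d)) :
    ConvexOn ℝ Set.univ (fun t : ℝ => P (x + t • (y - x))) := by
  have h := hconv.comp_affineMap (AffineMap.lineMap x y : ℝ →ᵃ[ℝ] EuclideanSpace ℝ (Fin d))
  have hs : ((AffineMap.lineMap x y : ℝ →ᵃ[ℝ] EuclideanSpace ℝ (Fin d)) ⁻¹' Set.univ)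
      = (Set.univ : Set ℝ) := by simp
  rw [hs] at h
  have e : (fun t : ℝ => P (x + t • (y - x))) = P ∘ AffineMap.lineMap x y := by
    funext t
    simp [AffineMap.lineMap_apply, Function.comp, add_comm]
  rw [e]
  exact h

lemma myLineDeriv {P : EuclideanSpace ℝ (Fin d) → ℝ} (hdiff : Differentiable ℝ P)
    (x u : EuclideanSpace ℝ (Fin d)) :
    HasDerivAt (fun t : ℝ => P (x + t • u)) (fderiv ℝ P x u) 0 := by
  have h1 : HasDerivAt (fun t : ℝ => x + t • u) u 0 := by
    simpa using ((hasDerivAt_id (0 : ℝ)).smul_const u).const_add x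
  have h2 := (hdiff (x + (0 : ℝ) • u)).hasFDerivAt.comp_hasDerivAt 0 h1
  simp only [zero_smul, add_zero] at h2
  exact h2

/-- First-order condition for convex functions. -/
lemma key1 {P : EuclideanSpace ℝ (Fin d) → ℝ} (hconv : ConvexOn ℝ Set.univ P)
    (hdiff : Differentiable ℝ P) (x y : EuclideanSpace ℝ (Fin d)) :
    fderiv ℝ P x (y - x) ≤ P y - P x := by
  have hc := lineConv hconv x y
  have hd := myLineDeriv hdiff x (y - x)
  have := hc.le_slope_of_hasDerivAt (Set.mem_univ (0 : ℝ)) (Set.mem_univ (1 : ℝ))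
    one_pos hd
  simpa [slope_def_field, slope, vsub_eq_sub] using this

end aux

theorem stmt7 {d : ℕ} (P : EuclideanSpace ℝ (Fin d) → ℝ) (B : ℝ)
    (wstar : EuclideanSpace ℝ (Fin d)) (hB : 0 < B)
    (hconv : ConvexOn ℝ Set.univ P) (hdiff : Differentiable ℝ P)
    (hmem : ‖wstar‖ ≤ B) (hmin : ∀ w, ‖w‖ ≤ B → P wstar ≤ P w)
    (hlt : ∃ w0, P w0 < P wstar) :
    ‖wstar‖ = B ∧
    (∀ w, ‖w‖ ≤ B → P w = P wstar → w = wstar) ∧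
    (∃ lam : ℝ, 0 < lam ∧
      ∀ w, w ≠ wstar →
        P wstar + lam * (‖wstar‖ ^ 2 - B ^ 2) < P w + lam * (‖w‖ ^ 2 - B ^ 2)) ∧
    (∃ μ : ℝ, 0 < μ ∧ ∀ w, ‖w‖ ≤ B → ‖w - wstar‖ ^ 2 ≤ μ ^ 2 * (P w - P wstar)) := by
  classical
  set g : EuclideanSpace ℝ (Fin d) →L[ℝ] ℝ := fderiv ℝ P wstar with hg
  set gv : EuclideanSpace ℝ (Fin d) :=
    (InnerProductSpace.toDual ℝ (EuclideanSpace ℝ (Fin d))).symm g with hgv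
  have hgrep : ∀ u, ⟪gv, u⟫ = g u := fun u => InnerProductSpace.toDual_symm_apply
  -- first-order inequality
  have hfo : ∀ y, g (y - wstar) ≤ P y - P wstar := fun y => key1 hconv hdiff wstar y
  -- g ≠ 0
  have hgv0 : gv ≠ 0 := by
    intro h0
    obtain ⟨w0, hw0⟩ := hlt
    have := hfo w0
    rw [← hgrep (w0 - wstar), h0] at this
    simp at this
    linarith
  have hgvnorm : 0 < ‖gv‖ := norm_pos_iff.mpr hgv0
  -- directional optimality
  have hdir : ∀ v, ‖v‖ ≤ B → 0 ≤ g (v - wstar) := by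
    intro v hv
    set u := v - wstar with hu
    have hD : HasDerivAt (fun t : ℝ => P (wstar + t • u)) (g u) 0 := myLineDeriv hdiff wstar u
    have hT : Filter.Tendsto (slope (fun t : ℝ => P (wstar + t • u)) 0)
        (nhdsWithin 0 (Set.Ioi 0)) (nhds (g u)) := by
      refine (hasDerivAt_iff_tendsto_slope.mp hD).mono_left (nhdsWithin_mono 0 ?_)
      intro x hx
      exact ne_of_gt hx
    refine ge_of_tendsto hT ?_
    filter_upwards [Ioo_mem_nhdsGT_of_mem (by norm_num : (0:ℝ) ∈ Set.Ico 0 1)] with t ht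
    have ht0 : 0 < t := ht.1
    have ht1 : t < 1 := ht.2
    have hmemball : ‖wstar + t • u‖ ≤ B := by
      have heq : wstar + t • u = (1 - t) • wstar + t • v := by
        rw [hu]; module
      rw [heq]
      calc ‖(1 - t) • wstar + t • v‖ ≤ ‖(1 - t) • wstar‖ + ‖t • v‖ := norm_add_le _ _
        _ = (1 - t) * ‖wstar‖ + t * ‖v‖ := by
            rw [norm_smul, norm_smul, Real.norm_eq_abs, Real.norm_eq_abs,
              abs_of_pos (by linarith), abs_of_pos ht0]
        _ ≤ (1 - t) * B + t * B := by
            have h1 : (0:ℝ) ≤ 1 - t := by linarith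
            have := mul_le_mul_of_nonneg_left hmem h1
            have := mul_le_mul_of_nonneg_left hv (le_of_lt ht0)
            nlinarith
        _ = B := by ring
    have hge : P wstar ≤ P (wstar + t • u) := hmin _ hmemball
    have : slope (fun t : ℝ => P (wstar + t • u)) 0 t
        = (P (wstar + t • u) - P (wstar + (0:ℝ) • u)) / (t - 0) := by
      simp [slope_def_field]
    rw [this]
    apply div_nonneg
    · simpa using sub_nonneg.mpr hge
    · linarith
  -- apply at v = -(B/‖gv‖) • gv
  have hinner_le : ⟪gv, wstar⟫ ≤ -(B * ‖gv‖) := by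
    have hvnorm : ‖(-(B / ‖gv‖)) • gv‖ = B := by
      rw [norm_smul, Real.norm_eq_abs, abs_neg, abs_of_pos (div_pos hB hgvnorm)]
      field_simp
    have h := hdir _ (le_of_eq hvnorm)
    rw [← hgrep] at h
    rw [inner_sub_right, inner_smul_right, real_inner_self_eq_norm_sq] at h
    have : -(B / ‖gv‖) * ‖gv‖ ^ 2 = -(B * ‖gv‖) := by
      field_simp
    linarith [h, this.symm.le]
  have hCS : -(‖gv‖ * ‖wstar‖) ≤ ⟪gv, wstar⟫ := by
    have := abs_real_inner_le_norm gv wstar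
    have := neg_abs_le (⟪gv, wstar⟫)
    linarith [abs_real_inner_le_norm gv wstar, neg_abs_le (⟪gv, wstar⟫)]
  -- norm of wstar equals B
  have hnorm : ‖wstar‖ = B := by
    have h1 : B * ‖gv‖ ≤ ‖gv‖ * ‖wstar‖ := by linarith
    have h2 : B ≤ ‖wstar‖ := by
      by_contra h
      push_neg at h
      nlinarith
    linarith
  -- equality in Cauchy-Schwarz
  have hinner_eq : ⟪gv, wstar⟫ = -(‖gv‖ * ‖wstar‖) := by
    have h7 : -(‖gv‖ * ‖wstar‖) = -(B * ‖gv‖) := by rw [hnorm]; ring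
    linarith
  -- equality case of Cauchy-Schwarz: gv is a negative multiple of wstar
  have heqcase : ‖wstar‖ • (-gv) = ‖-gv‖ • wstar := by
    apply inner_eq_norm_mul_iff_real.mp
    rw [inner_neg_left, hinner_eq, norm_neg]
    ring
  set lam : ℝ := ‖gv‖ / (2 * B) with hlam
  have hlampos : 0 < lam := div_pos hgvnorm (by linarith)
  have hlin : ∀ u, g u = -(2 * lam) * ⟪wstar, u⟫ := by
    intro u
    have h1 := congrArg (fun z : EuclideanSpace ℝ (Fin d) => ⟪z, u⟫) heqcase
    simp only [real_inner_smul_left, inner_neg_left] at h1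
    rw [hnorm, norm_neg] at h1
    -- h1 : B * -⟪gv, u⟫ = ‖gv‖ * ⟪wstar, u⟫
    have hB' : (B : ℝ) ≠ 0 := ne_of_gt hB
    have h2 : (2 * lam) * B = ‖gv‖ := by rw [hlam]; field_simp
    rw [← hgrep u]
    rw [← h2] at h1
    have h3 : B * ⟪gv, u⟫ = B * (-(2 * lam) * ⟪wstar, u⟫) := by linarith [h1]
    have h4 := mul_left_cancel₀ hB' h3
    linarith
  have hmain : ∀ w, P wstar - 2 * lam * ⟪wstar, w - wstar⟫ ≤ P w := by
    intro w
    have h1 := hfo w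
    rw [hlin (w - wstar)] at h1
    linarith
  -- quadratic growth (used for parts 2 and 4)
  have hgrowth : ∀ w, ‖w‖ ≤ B → lam * ‖w - wstar‖ ^ 2 ≤ P w - P wstar := by
    intro w hw
    have h1 := hmain w
    have h2 : ⟪wstar, w - wstar⟫ = ⟪wstar, w⟫ - ‖wstar‖ ^ 2 := by
      rw [inner_sub_right, real_inner_self_eq_norm_sq]
    have h3 : ‖w - wstar‖ ^ 2 = ‖w‖ ^ 2 - 2 * ⟪w, wstar⟫ + ‖wstar‖ ^ 2 :=
      norm_sub_sq_real w wstar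
    have h4 : ⟪w, wstar⟫ = ⟪wstar, w⟫ := real_inner_comm wstar w
    have h5 : ‖w‖ ^ 2 ≤ B ^ 2 := by nlinarith [norm_nonneg w]
    rw [hnorm] at h2 h3
    rw [h2] at h1
    rw [h3, h4]
    have hprod : 0 ≤ lam * (B ^ 2 - ‖w‖ ^ 2) :=
      mul_nonneg hlampos.le (by linarith)
    nlinarith [hprod, h1]
  refine ⟨hnorm, ?_, ?_, ?_⟩
  · -- uniqueness
    intro w hw heq
    have h1 := hgrowth w hw
    have h2 : ‖w - wstar‖ ^ 2 ≤ 0 := by nlinarith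
    have h3 : ‖w - wstar‖ = 0 := by nlinarith [norm_nonneg (w - wstar), sq_nonneg ‖w - wstar‖]
    have := norm_eq_zero.mp h3
    rwa [sub_eq_zero] at this
  · -- strict minimizer of the Lagrangian
    refine ⟨lam, hlampos, fun w hwne => ?_⟩
    have h1 := hmain w
    have h2 : ⟪wstar, w - wstar⟫ = ⟪wstar, w⟫ - ‖wstar‖ ^ 2 := by
      rw [inner_sub_right, real_inner_self_eq_norm_sq]
    have h3 : ‖w - wstar‖ ^ 2 = ‖w‖ ^ 2 - 2 * ⟪w, wstar⟫ + ‖wstar‖ ^ 2 :=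
      norm_sub_sq_real w wstar
    have h4 : ⟪w, wstar⟫ = ⟪wstar, w⟫ := real_inner_comm wstar w
    have h5 : 0 < ‖w - wstar‖ ^ 2 := by
      have h6 : w - wstar ≠ 0 := sub_ne_zero.mpr hwne
      exact pow_pos (norm_pos_iff.mpr h6) 2
    rw [hnorm] at h2 h3 ⊢
    rw [h2] at h1
    have hp : 0 < lam * ‖w - wstar‖ ^ 2 := mul_pos hlampos h5
    rw [h3, h4] at hp
    nlinarith [hp, h1]
  · -- EBC
    refine ⟨Real.sqrt lam⁻¹, Real.sqrt_pos.mpr (inv_pos.mpr hlampos), fun w hw => ?_⟩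
    have hsq : Real.sqrt lam⁻¹ ^ 2 = lam⁻¹ :=
      Real.sq_sqrt (le_of_lt (inv_pos.mpr hlampos))
    rw [hsq]
    have h1 := hgrowth w hw
    have h2 := mul_le_mul_of_nonneg_left h1 (le_of_lt (inv_pos.mpr hlampos))
    rw [← mul_assoc, inv_mul_cancel₀ (ne_of_gt hlampos), one_mul] at h2
    exact h2
end

section
/- Let P, P_n : ℝ^d → ℝ where P = F + r and P_n = F_n + r with F, F_n differentiable convex, r convex, and W convex closed. Let ŵ ∈ argmin_{w∈W} P_n(w) and ŵ* a minimizer of P on W closest to ŵ. Then P(ŵ) - P(ŵ*) ≤ (‖∇F(ŵ) - ∇F(ŵ*) - [∇F_n(ŵ) - ∇F_n(ŵ*)]‖₂ + ‖∇F(ŵ*) - ∇F_n(ŵ*)‖₂) · ‖ŵ - ŵ*‖₂. -/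
open InnerProductSpace

/-- Gradient inequality for a differentiable convex function on a Euclidean space. -/
lemma grad_convex_ineq {d : ℕ} {F : EuclideanSpace ℝ (Fin d) → ℝ}
    (hF : Differentiable ℝ F) (hFc : ConvexOn ℝ Set.univ F)
    (x y : EuclideanSpace ℝ (Fin d)) :
    F x + (inner ℝ (gradient F x) (y - x) : ℝ) ≤ F y := by
  set g : ℝ → ℝ := fun t : ℝ => F (x + t • (y - x)) with hg
  have hc : HasDerivAt (fun t : ℝ => x + t • (y - x)) (y - x) 0 := by
    simpa using ((hasDerivAt_id (0 : ℝ)).smul_const (y - x)).const_add x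
  have hx0 : x + (0 : ℝ) • (y - x) = x := by simp
  have hFx : HasFDerivAt F (toDual ℝ _ (gradient F x)) (x + (0 : ℝ) • (y - x)) := by
    rw [hx0]; exact (hF x).hasGradientAt.hasFDerivAt
  have hgd : HasDerivAt g ((inner ℝ (gradient F x) (y - x) : ℝ)) 0 := by
    have := hFx.comp_hasDerivAt 0 hc
    rw [toDual_apply_apply] at this; exact this
  have hgc : ConvexOn ℝ Set.univ g := by
    have h := hFc.comp_affineMap (AffineMap.lineMap x y : ℝ →ᵃ[ℝ] EuclideanSpace ℝ (Fin d))
    have : (F ∘ (AffineMap.lineMap x y : ℝ →ᵃ[ℝ] EuclideanSpace ℝ (Fin d))) = g := by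
      funext t
      simp [g, AffineMap.lineMap_apply, add_comm]
    rw [this] at h
    simpa using h
  have hslope := hgc.le_slope_of_hasDerivAt (Set.mem_univ (0 : ℝ)) (Set.mem_univ (1 : ℝ))
    zero_lt_one hgd
  have hs : slope g 0 1 = g 1 - g 0 := by simp [slope_def_field]
  have hg0 : g 0 = F x := by simp [g]
  have hg1 : g 1 = F y := by simp [g]
  rw [hs, hg0, hg1] at hslope
  linarith

theorem stmt11 {d : ℕ} (W : Set (EuclideanSpace ℝ (Fin d)))
    (F Fn r : EuclideanSpace ℝ (Fin d) → ℝ)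
    (what wstar : EuclideanSpace ℝ (Fin d))
    (hW : Convex ℝ W) (hWc : IsClosed W)
    (hF : Differentiable ℝ F) (hFn : Differentiable ℝ Fn)
    (hFconv : ConvexOn ℝ Set.univ F) (hFnconv : ConvexOn ℝ Set.univ Fn)
    (hrconv : ConvexOn ℝ Set.univ r)
    (hwhat : what ∈ W) (hwstar : wstar ∈ W)
    (hopt : ∃ v : EuclideanSpace ℝ (Fin d),
      (∀ u, r what + (inner ℝ v (u - what) : ℝ) ≤ r u) ∧
      ∀ w ∈ W, 0 ≤ (inner ℝ (gradient Fn what + v) (w - what) : ℝ))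
    (hminn : ∀ w ∈ W, Fn what + r what ≤ Fn w + r w)
    (hmin : ∀ w ∈ W, F wstar + r wstar ≤ F w + r w)
    (hclosest : ∀ u ∈ W, F u + r u = F wstar + r wstar → ‖what - wstar‖ ≤ ‖what - u‖) :
    (F what + r what) - (F wstar + r wstar) ≤
      (‖gradient F what - gradient F wstar - (gradient Fn what - gradient Fn wstar)‖ +
        ‖gradient F wstar - gradient Fn wstar‖) * ‖what - wstar‖ := by
  obtain ⟨v, hv, hvW⟩ := hopt
  have hFgrad := grad_convex_ineq hF hFconv what wstar
  have hrsub := hv wstar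
  have e1 : (inner ℝ (gradient F what) (what - wstar) : ℝ)
      = - inner ℝ (gradient F what) (wstar - what) := by
    rw [← inner_neg_right, neg_sub]
  have e2 : (inner ℝ v (what - wstar) : ℝ) = - inner ℝ v (wstar - what) := by
    rw [← inner_neg_right, neg_sub]
  have e3 : (inner ℝ (gradient Fn what) (what - wstar) : ℝ)
      = - inner ℝ (gradient Fn what) (wstar - what) := by
    rw [← inner_neg_right, neg_sub]
  have h4 := hvW wstar hwstar
  rw [inner_add_left] at h4
  have key : (F what + r what) - (F wstar + r wstar)
      ≤ (inner ℝ (gradient F what - gradient Fn what) (what - wstar) : ℝ) := by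
    rw [inner_sub_left, e1, e3]
    linarith
  have split : gradient F what - gradient Fn what
      = (gradient F what - gradient F wstar - (gradient Fn what - gradient Fn wstar))
        + (gradient F wstar - gradient Fn wstar) := by abel
  calc (F what + r what) - (F wstar + r wstar)
      ≤ (inner ℝ (gradient F what - gradient Fn what) (what - wstar) : ℝ) := key
    _ = (inner ℝ (gradient F what - gradient F wstar - (gradient Fn what - gradient Fn wstar))
          (what - wstar) : ℝ)
        + (inner ℝ (gradient F wstar - gradient Fn wstar) (what - wstar) : ℝ) := by
        rw [split, inner_add_left]
    _ ≤ ‖gradient F what - gradient F wstar - (gradient Fn what - gradient Fn wstar)‖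
          * ‖what - wstar‖
        + ‖gradient F wstar - gradient Fn wstar‖ * ‖what - wstar‖ :=
        add_le_add (real_inner_le_norm _ _) (real_inner_le_norm _ _)
    _ = _ := by ring
end

section
/- Let f(w,z) = (w - z)²/2 with w ∈ ℝ and z ∼ N(v, 1) normal with mean v. Then P(w) = E_z[f(w,z)] = (w - v)²/2 + 1/2, the unique minimizer is w* = v, and ‖w - w*‖² = (w-v)² = 2(P(w) - P(w*)), so EBC(θ = 1, α = 2) holds on all of ℝ. Moreover, for every B ≥ 1 there exists w with |w| > √(32B) such that the (1,B)-Bernstein condition E_z[(f(w,z) - f(w*,z))²] ≤ B · E_z[f(w,z) - f(w*,z)] fails. -/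
open MeasureTheory ProbabilityTheory Real
open scoped ENNReal NNReal

lemma ig0 : Integrable fun x : ℝ => Real.exp (-(1/2) * x ^ 2) :=
  integrable_exp_neg_mul_sq (by norm_num)

lemma ig1 : Integrable fun x : ℝ => x * Real.exp (-(1/2) * x ^ 2) :=
  integrable_mul_exp_neg_mul_sq (by norm_num)

lemma ig2 : Integrable fun x : ℝ => x ^ 2 * Real.exp (-(1/2) * x ^ 2) := by
  have h := integrable_rpow_mul_exp_neg_mul_sq (b := 1/2) (by norm_num) (s := 2) (by norm_num)
  have h2 : ∀ x : ℝ, x ^ (2:ℝ) = x ^ 2 := fun x => by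
    rw [show (2:ℝ) = ((2:ℕ):ℝ) by norm_num, Real.rpow_natCast]
  simpa [h2] using h

lemma int_gauss0 : ∫ x : ℝ, Real.exp (-(1/2) * x ^ 2) = Real.sqrt (2 * Real.pi) := by
  have h := integral_gaussian (1/2)
  rw [show Real.pi / (1/2) = 2 * Real.pi by ring] at h
  exact h

lemma int_gauss1 : ∫ x : ℝ, x * Real.exp (-(1/2) * x ^ 2) = 0 := by
  have hderiv : ∀ x : ℝ, HasDerivAt (fun x : ℝ => -Real.exp (-(1/2) * x ^ 2))
      (x * Real.exp (-(1/2) * x ^ 2)) x := by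
    intro x
    have h1 : HasDerivAt (fun x : ℝ => -(1/2) * x ^ 2) (-(1/2) * (2 * x)) x := by
      simpa using (hasDerivAt_pow 2 x).const_mul (-(1/2) : ℝ)
    have h2 := h1.exp.neg
    refine h2.congr_deriv ?_
    ring
  exact integral_eq_zero_of_hasDerivAt_of_integrable hderiv ig1 ig0.neg

lemma int_gauss2 : ∫ x : ℝ, x ^ 2 * Real.exp (-(1/2) * x ^ 2) = Real.sqrt (2 * Real.pi) := by
  have hderiv : ∀ x : ℝ, HasDerivAt (fun x : ℝ => -(x * Real.exp (-(1/2) * x ^ 2)))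
      (x ^ 2 * Real.exp (-(1/2) * x ^ 2) - Real.exp (-(1/2) * x ^ 2)) x := by
    intro x
    have h1 : HasDerivAt (fun x : ℝ => -(1/2) * x ^ 2) (-(1/2) * (2 * x)) x := by
      simpa using (hasDerivAt_pow 2 x).const_mul (-(1/2) : ℝ)
    have h2 := ((hasDerivAt_id x).mul h1.exp).neg
    refine h2.congr_deriv ?_
    simp [Real.exp_ne_zero]
    ring
  have h := integral_eq_zero_of_hasDerivAt_of_integrable hderiv (ig2.sub ig0) ig1.neg
  rw [integral_sub ig2 ig0, int_gauss0] at h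
  linarith

lemma gauss_quad (a b c : ℝ) :
    ∫ x, (a * x ^ 2 + b * x + c) ∂(gaussianReal 0 1) = a + c := by
  rw [gaussianReal_of_var_ne_zero 0 one_ne_zero]
  have hm : Measurable fun x => (gaussianPDFReal 0 1 x).toNNReal :=
    (measurable_gaussianPDFReal 0 1).real_toNNReal
  have hpdf : gaussianPDF 0 1 = fun x => ((gaussianPDFReal 0 1 x).toNNReal : ℝ≥0∞) := by
    funext x; rfl
  rw [hpdf, integral_withDensity_eq_integral_smul hm]
  have hval : ∀ x : ℝ, (gaussianPDFReal 0 1 x).toNNReal • (a * x ^ 2 + b * x + c)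
      = (Real.sqrt (2 * Real.pi))⁻¹ *
        (a * (x ^ 2 * Real.exp (-(1/2) * x ^ 2)) + b * (x * Real.exp (-(1/2) * x ^ 2))
          + c * Real.exp (-(1/2) * x ^ 2)) := by
    intro x
    rw [NNReal.smul_def, Real.coe_toNNReal _ (gaussianPDFReal_nonneg 0 1 x), gaussianPDFReal]
    push_cast
    rw [show (2 : ℝ) * Real.pi * 1 = 2 * Real.pi by ring,
      show -(x - 0) ^ 2 / (2 * 1) = -(1/2) * x ^ 2 by ring, smul_eq_mul]
    ring
  simp_rw [hval]
  have hi1 : Integrable (fun x : ℝ => a * (x ^ 2 * Real.exp (-(1/2) * x ^ 2))) := ig2.const_mul a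
  have hi2 : Integrable (fun x : ℝ => b * (x * Real.exp (-(1/2) * x ^ 2))) := ig1.const_mul b
  have hi3 : Integrable (fun x : ℝ => c * Real.exp (-(1/2) * x ^ 2)) := ig0.const_mul c
  have hi12 : Integrable (fun x : ℝ => a * (x ^ 2 * Real.exp (-(1/2) * x ^ 2))
      + b * (x * Real.exp (-(1/2) * x ^ 2))) := hi1.add hi2
  rw [integral_const_mul, integral_add hi12 hi3, integral_add hi1 hi2,
    integral_const_mul, integral_const_mul, integral_const_mul,
    int_gauss0, int_gauss1, int_gauss2]
  have hs : Real.sqrt (2 * Real.pi) ≠ 0 := ne_of_gt (Real.sqrt_pos.2 (by positivity))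
  field_simp
  ring

lemma gauss_poly (v a b c : ℝ) :
    ∫ z, (a * z ^ 2 + b * z + c) ∂(gaussianReal v 1) = a * (v ^ 2 + 1) + b * v + c := by
  have hmap : (gaussianReal 0 1).map (· + v) = gaussianReal v 1 := by
    simpa using gaussianReal_map_add_const (μ := 0) (v := 1) v
  rw [← hmap, integral_map (measurable_add_const v).aemeasurable
    ((by continuity : Continuous fun z : ℝ => a * z ^ 2 + b * z + c).aestronglyMeasurable)]
  have h : ∀ x : ℝ, a * (x + v) ^ 2 + b * (x + v) + c
      = a * x ^ 2 + (2 * a * v + b) * x + (a * v ^ 2 + b * v + c) := fun x => by ring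
  simp_rw [h, gauss_quad]
  ring

lemma Pval (v w : ℝ) : ∫ z, (w - z) ^ 2 / 2 ∂(gaussianReal v 1) = (w - v) ^ 2 / 2 + 1 / 2 := by
  have h : ∀ z : ℝ, (w - z) ^ 2 / 2 = (1/2) * z ^ 2 + (-w) * z + w ^ 2 / 2 := fun z => by ring
  simp_rw [h, gauss_poly]; ring

lemma Sval (v w : ℝ) : ∫ z, ((w - z) ^ 2 / 2 - (v - z) ^ 2 / 2) ^ 2 ∂(gaussianReal v 1)
    = (w - v) ^ 4 / 4 + (w - v) ^ 2 := by
  have h : ∀ z : ℝ, ((w - z) ^ 2 / 2 - (v - z) ^ 2 / 2) ^ 2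
      = ((w - v) ^ 2) * z ^ 2 + (-((w - v) ^ 2 * (w + v))) * z + (w - v) ^ 2 * (w + v) ^ 2 / 4 :=
    fun z => by ring
  simp_rw [h, gauss_poly]; ring

lemma Dval (v w : ℝ) : ∫ z, ((w - z) ^ 2 / 2 - (v - z) ^ 2 / 2) ∂(gaussianReal v 1)
    = (w - v) ^ 2 / 2 := by
  have h : ∀ z : ℝ, (w - z) ^ 2 / 2 - (v - z) ^ 2 / 2
      = (0:ℝ) * z ^ 2 + (-(w - v)) * z + (w ^ 2 - v ^ 2) / 2 := fun z => by ring
  simp_rw [h, gauss_poly]; ring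

theorem stmt17 (v : ℝ) (f : ℝ → ℝ → ℝ)
    (hf : ∀ w z, f w z = (w - z) ^ 2 / 2)
    (P : ℝ → ℝ)
    (hP : ∀ w, P w = ∫ z, f w z ∂(gaussianReal v 1)) :
    (∀ w, P w = (w - v) ^ 2 / 2 + 1 / 2) ∧
    (∀ w, P v ≤ P w) ∧
    (∀ w, P w = P v → w = v) ∧
    (∀ w, (w - v) ^ 2 = 2 * (P w - P v)) ∧
    (∀ B : ℝ, 1 ≤ B → ∃ w : ℝ, Real.sqrt (32 * B) < |w| ∧
      ¬ (∫ z, (f w z - f v z) ^ 2 ∂(gaussianReal v 1) ≤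
          B * ∫ z, (f w z - f v z) ∂(gaussianReal v 1))) := by
  have hP' : ∀ w, P w = (w - v) ^ 2 / 2 + 1 / 2 := by
    intro w; rw [hP w]; simp only [hf]; exact Pval v w
  refine ⟨hP', ?_, ?_, ?_, ?_⟩
  · intro w; rw [hP' w, hP' v]; nlinarith [sq_nonneg (w - v)]
  · intro w h
    rw [hP' w, hP' v] at h
    have h2 : (w - v) ^ 2 = 0 := by nlinarith
    have := sq_eq_zero_iff.mp h2
    linarith
  · intro w; rw [hP' w, hP' v]; ring
  · intro B hB
    refine ⟨v + (Real.sqrt (32 * B) + |v| + 1), ?_, ?_⟩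
    · have h1 : Real.sqrt (32 * B) + 1 ≤ v + (Real.sqrt (32 * B) + |v| + 1) := by
        have := neg_abs_le v; linarith
      calc Real.sqrt (32 * B) < Real.sqrt (32 * B) + 1 := by linarith
        _ ≤ v + (Real.sqrt (32 * B) + |v| + 1) := h1
        _ ≤ |v + (Real.sqrt (32 * B) + |v| + 1)| := le_abs_self _
    · set w := v + (Real.sqrt (32 * B) + |v| + 1) with hw
      clear_value w
      intro hle
      have hS : ∫ z, (f w z - f v z) ^ 2 ∂(gaussianReal v 1)
          = (w - v) ^ 4 / 4 + (w - v) ^ 2 := by simp only [hf]; exact Sval v w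
      have hD : ∫ z, (f w z - f v z) ∂(gaussianReal v 1) = (w - v) ^ 2 / 2 := by
        simp only [hf]; exact Dval v w
      rw [hS, hD] at hle
      have hsq : Real.sqrt (32 * B) ^ 2 = 32 * B := Real.sq_sqrt (by positivity)
      have h0 : 0 ≤ |v| := abs_nonneg v
      have h0' : 0 ≤ Real.sqrt (32 * B) := Real.sqrt_nonneg _
      have hwv : w - v = Real.sqrt (32 * B) + |v| + 1 := by rw [hw]; ring
      have ht : 32 * B ≤ (w - v) ^ 2 := by rw [hwv]; nlinarith
      have htpos : (0:ℝ) < (w - v) ^ 2 := by nlinarith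
      have key : 32 * B * (w - v) ^ 2 ≤ (w - v) ^ 2 * (w - v) ^ 2 :=
        mul_le_mul_of_nonneg_right ht htpos.le
      have hBt : 0 < B * (w - v) ^ 2 := mul_pos (by linarith) htpos
      have h4 : (w - v) ^ 4 = (w - v) ^ 2 * (w - v) ^ 2 := by ring
      nlinarith [key, hBt, h4, hle, htpos]
end
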